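/- For 0 < ε < 1 one has artanh(1 - ε/2) ≥ artanh(1/2) = (1/2)ln 3; consequently, if U solves U' + U² + K = 0 with K ≤ -e^{-2μ}ε on [0, Λ̄] with Λ̄ ≥ (1/√ε)artanh(1 - ε/2), U(0) ≥ 0, and μ ≥ 0, then U(Λ̄) > e^{-μ}√ε · tanh((1/2)e^{-μ} ln 3). -/

import Mathlib

open Set

/-- The inverse hyperbolic tangent. -/
noncomputable def artanh (x : ℝ) : ℝ := (1 / 2) * Real.log ((1 + x) / (1 - x))

lemma my_hasDerivAt_tanh (x : ℝ) :
    HasDerivAt Real.tanh (1 - Real.tanh x ^ 2) x := by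
  have hc := Real.cosh_pos x
  have h : HasDerivAt (fun y => Real.sinh y / Real.cosh y)
      ((Real.cosh x * Real.cosh x - Real.sinh x * Real.sinh x) / Real.cosh x ^ 2) x :=
    (Real.hasDerivAt_sinh x).div (Real.hasDerivAt_cosh x) hc.ne'
  have heq : ∀ y, Real.tanh y = Real.sinh y / Real.cosh y := fun y =>
    Real.tanh_eq_sinh_div_cosh y
  have : HasDerivAt Real.tanh
      ((Real.cosh x * Real.cosh x - Real.sinh x * Real.sinh x) / Real.cosh x ^ 2) x := by
    simpa [funext heq] using h
  convert this using 1
  rw [heq]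
  field_simp

lemma my_tanh_sq_lt_one (x : ℝ) : Real.tanh x ^ 2 < 1 := by
  have hc := Real.cosh_pos x
  rw [Real.tanh_eq_sinh_div_cosh, div_pow, div_lt_one (by positivity)]
  nlinarith [Real.cosh_sq_sub_sinh_sq x]

lemma my_tanh_strictMono : StrictMono Real.tanh := by
  have h : ∀ x : ℝ, 0 < deriv Real.tanh x := by
    intro x
    rw [(my_hasDerivAt_tanh x).deriv]
    nlinarith [my_tanh_sq_lt_one x]
  exact strictMono_of_deriv_pos h

/-- For `0 < ε < 1`, `artanh(1-ε/2) ≥ artanh(1/2) = (1/2) ln 3`; consequently if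
`U` solves `U' + U² + K = 0` with `K ≤ -e^{-2μ} ε` on `[0,Λ̄]`,
`Λ̄ ≥ (1/√ε) artanh(1-ε/2)`, `U 0 ≥ 0` and `μ ≥ 0`, then
`U Λ̄ > e^{-μ} √ε tanh((1/2) e^{-μ} ln 3)`. -/
theorem stmt_9 (ε μ Λb : ℝ) (hε0 : 0 < ε) (hε1 : ε < 1) (hμ : 0 ≤ μ)
    (hΛb : (1 / Real.sqrt ε) * artanh (1 - ε / 2) ≤ Λb)
    (K U : ℝ → ℝ)
    (hKcont : ContinuousOn K (Icc 0 Λb))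
    (hK : ∀ t ∈ Icc 0 Λb, K t ≤ -(Real.exp (-2 * μ) * ε))
    (hU : ∀ t ∈ Icc 0 Λb, HasDerivAt U (-(U t) ^ 2 - K t) t)
    (hU0 : 0 ≤ U 0) :
    artanh (1 / 2) = (1 / 2) * Real.log 3 ∧
    (1 / 2) * Real.log 3 ≤ artanh (1 - ε / 2) ∧
    Real.exp (-μ) * Real.sqrt ε *
      Real.tanh ((1 / 2) * Real.exp (-μ) * Real.log 3) < U Λb := by
  have hsq : 0 < Real.sqrt ε := Real.sqrt_pos.mpr hε0
  set a : ℝ := Real.exp (-μ) * Real.sqrt ε with ha_def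
  have ha : 0 < a := by positivity
  have ha2 : a ^ 2 = Real.exp (-2 * μ) * ε := by
    rw [ha_def, mul_pow, Real.sq_sqrt hε0.le, sq, ← Real.exp_add]
    ring_nf
  -- artanh facts
  have hart1 : artanh (1 / 2) = (1 / 2) * Real.log 3 := by
    unfold artanh; norm_num
  have hart2 : artanh (1 - ε / 2) = (1 / 2) * Real.log ((4 - ε) / ε) := by
    unfold artanh
    congr 2
    rw [div_eq_div_iff (by linarith : (0:ℝ) < 1 - (1 - ε / 2)).ne' hε0.ne']
    ring
  have hgt3 : (3 : ℝ) < (4 - ε) / ε := by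
    rw [lt_div_iff₀ hε0]; linarith
  have hartlt : (1 / 2) * Real.log 3 < artanh (1 - ε / 2) := by
    rw [hart2]
    have := Real.log_lt_log (by norm_num) hgt3
    linarith
  refine ⟨hart1, hartlt.le, ?_⟩
  -- positivity of Λb
  have hart_pos : 0 < artanh (1 - ε / 2) := by
    have : 0 < Real.log 3 := Real.log_pos (by norm_num)
    linarith
  have hΛb0 : 0 < Λb := lt_of_lt_of_le (by positivity) hΛb
  -- comparison: for all b ∈ (0, a), b * tanh (b * Λb) ≤ U Λb
  have hcomp : ∀ b ∈ Ioo 0 a, b * Real.tanh (b * Λb) ≤ U Λb := by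
    intro b hb
    obtain ⟨hb0, hba⟩ := hb
    set f : ℝ → ℝ := fun t => b * Real.tanh (b * t) with hf_def
    have hf' : ∀ x : ℝ, HasDerivAt f (b ^ 2 * (1 - Real.tanh (b * x) ^ 2)) x := by
      intro x
      have h1 : HasDerivAt (fun t : ℝ => b * t) b x := by
        simpa using (hasDerivAt_id x).const_mul b
      have h2 := (my_hasDerivAt_tanh (b * x)).comp x h1
      have h3 := h2.const_mul b
      refine h3.congr_deriv ?_
      ring
    have key := image_le_of_deriv_right_lt_deriv_boundary'
      (f := f) (f' := fun x => b ^ 2 * (1 - Real.tanh (b * x) ^ 2))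
      (a := 0) (b := Λb) (B := U) (B' := fun t => -(U t) ^ 2 - K t)
      (fun x _ => (hf' x).continuousAt.continuousWithinAt)
      (fun x _ => (hf' x).hasDerivWithinAt)
      (by simpa [hf_def, Real.tanh_zero] using hU0)
      (fun x hx => (hU x hx).continuousAt.continuousWithinAt)
      (fun x hx => (hU x (Ico_subset_Icc_self hx)).hasDerivWithinAt)
      ?_ (right_mem_Icc.mpr hΛb0.le)
    · exact key
    · intro x hx hfx
      have hKx := hK x (Ico_subset_Icc_self hx)
      have heq : b ^ 2 * (1 - Real.tanh (b * x) ^ 2) = b ^ 2 - (f x) ^ 2 := by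
        simp only [hf_def]; ring
      show b ^ 2 * (1 - Real.tanh (b * x) ^ 2) < -(U x) ^ 2 - K x
      rw [heq, hfx]
      have hb2 : b ^ 2 < a ^ 2 := by nlinarith
      rw [ha2] at hb2
      linarith
  -- pass to the limit b → a⁻
  have hcont : ContinuousAt (fun b => b * Real.tanh (b * Λb)) a := by
    have : Continuous (fun b : ℝ => b * Real.tanh (b * Λb)) := by
      have ht : Continuous Real.tanh :=
        Differentiable.continuous fun x => (my_hasDerivAt_tanh x).differentiableAt
      exact continuous_id.mul (ht.comp (continuous_id.mul continuous_const))
    exact this.continuousAt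
  have hlim : a * Real.tanh (a * Λb) ≤ U Λb := by
    have htd : Filter.Tendsto (fun b => b * Real.tanh (b * Λb)) (nhdsWithin a (Iio a))
        (nhds (a * Real.tanh (a * Λb))) := hcont.tendsto.mono_left nhdsWithin_le_nhds
    refine le_of_tendsto htd ?_
    filter_upwards [Ioo_mem_nhdsLT ha] with b hb using hcomp b hb
  -- final strict inequality
  have harg : (1 / 2) * Real.exp (-μ) * Real.log 3 < a * Λb := by
    have h1 : Real.exp (-μ) * artanh (1 - ε / 2) ≤ a * Λb := by
      have := mul_le_mul_of_nonneg_left hΛb (by positivity : (0:ℝ) ≤ a)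
      calc Real.exp (-μ) * artanh (1 - ε / 2)
          = a * ((1 / Real.sqrt ε) * artanh (1 - ε / 2)) := by
            rw [ha_def]; field_simp
        _ ≤ a * Λb := this
    have h2 : Real.exp (-μ) * ((1 / 2) * Real.log 3) < Real.exp (-μ) * artanh (1 - ε / 2) :=
      mul_lt_mul_of_pos_left hartlt (Real.exp_pos _)
    nlinarith
  calc Real.exp (-μ) * Real.sqrt ε * Real.tanh ((1 / 2) * Real.exp (-μ) * Real.log 3)
      < a * Real.tanh (a * Λb) := by
        exact mul_lt_mul_of_pos_left (my_tanh_strictMono harg) ha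
    _ ≤ U Λb := hlim
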